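/- If g is an eigenfunction of λ_0 on a finite tree with g_0 = 0 and g_i > g_{i*} for all i ∈ T\{0}, and w_i = g_i/g_{i*} (with w at the son of 0 equal to ∞), then R_i(w) = λ_0 for all i ∈ T\{0}. Consequently sup_{w∈W} inf_{i∈T\{0}} R_i(w) = λ_0 on finite trees, where W = {w : w > 1, w_0 = ∞}. -/

import Mathlib

open Finset
open scoped Classical

structure BDTree (V : Type*) [Fintype V] where
  root : V
  parent : V → V
  layer : V → ℕ
  q : V → V → ℝ
  parent_root : parent root = root
  layer_root : layer root = 0
  layer_parent : ∀ i, i ≠ root → layer i = layer (parent i) + 1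
  reach : ∀ i, ∃ n, parent^[n] i = root
  q_pos_up : ∀ i, i ≠ root → 0 < q i (parent i)
  q_pos_down : ∀ i, i ≠ root → 0 < q (parent i) i

namespace BDTree

variable {V : Type*} [Fintype V] (T : BDTree V)

/-- The set of sons of a vertex. -/
noncomputable def sons (i : V) : Finset V :=
  Finset.univ.filter fun j => j ≠ T.root ∧ T.parent j = i

/-- The subtree `T_k` rooted at `k` (including `k`). -/
noncomputable def subtree (k : V) : Finset V :=
  Finset.univ.filter fun j => ∃ n, T.parent^[n] j = k

/-- The path set `P(i)`: vertices (excluding the root) on the path from `i` to the root. -/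
noncomputable def pathSet (i : V) : Finset V :=
  Finset.univ.filter fun k => k ≠ T.root ∧ ∃ n, T.parent^[n] i = k

/-- The symmetric measure `μ`. -/
noncomputable def mu (k : V) : ℝ :=
  ∏ j ∈ T.pathSet k, T.q (T.parent j) j / T.q j (T.parent j)

/-- The operator `Ω`. -/
noncomputable def Omega (g : V → ℝ) (i : V) : ℝ :=
  (∑ j ∈ T.sons i, T.q i j * (g j - g i)) + T.q i (T.parent i) * (g (T.parent i) - g i)

/-- The set of non-root vertices `T \ {0}`. -/
noncomputable def nonroot : Finset V := Finset.univ.filter fun i => i ≠ T.root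

/-- The Dirichlet form `D(f)`. -/
noncomputable def D (f : V → ℝ) : ℝ :=
  ∑ i ∈ T.nonroot, T.mu i * T.q i (T.parent i) * (f i - f (T.parent i)) ^ 2

/-- `μ(f²)`. -/
noncomputable def norm2 (f : V → ℝ) : ℝ := ∑ i ∈ T.nonroot, T.mu i * f i ^ 2

/-- The principal Dirichlet eigenvalue `λ₀`, via the classical variational formula. -/
noncomputable def lam0 : ℝ := sInf {r | ∃ f : V → ℝ, f T.root = 0 ∧ T.norm2 f = 1 ∧ r = T.D f}

/-- The single-summation operator `I`. -/
noncomputable def opI (f : V → ℝ) (i : V) : ℝ :=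
  (∑ j ∈ T.subtree i, T.mu j * f j) /
    (T.mu i * T.q i (T.parent i) * (f i - f (T.parent i)))

/-- The double-summation operator `II`. -/
noncomputable def opII (f : V → ℝ) (i : V) : ℝ :=
  (∑ k ∈ T.pathSet i, (1 / (T.mu k * T.q k (T.parent k))) *
      ∑ j ∈ T.subtree k, T.mu j * f j) / f i

/-- The difference-form operator `R`; at a son of the root the convention `w_0 = ∞`,
`1/∞ = 0` is used, i.e. the term `w i⁻¹` is replaced by `0`. -/
noncomputable def R (w : V → ℝ) (i : V) : ℝ :=
  T.q i (T.parent i) * (1 - (if T.parent i = T.root then 0 else (w i)⁻¹)) +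
    ∑ j ∈ T.sons i, T.q i j * (1 - w j)

/-- Membership in the test-function class `W = {w : w > 1, w_0 = ∞}` (the value at a son
of the root plays the role of `∞` and is not used by `R`). -/
def memW (w : V → ℝ) : Prop := ∀ i, i ≠ T.root → T.parent i ≠ T.root → 1 < w i

/-- `φ_j = Σ_{k∈P(j)} 1/(μ_k q_{kk*})`. -/
noncomputable def phi (j : V) : ℝ :=
  ∑ k ∈ T.pathSet j, 1 / (T.mu k * T.q k (T.parent k))

end BDTree
namespace BDTree

variable {V : Type*} [Fintype V] (T : BDTree V)

lemma layer_parent_lt {i : V} (hi : i ≠ T.root) : T.layer (T.parent i) < T.layer i := by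
  rw [T.layer_parent i hi]; omega

lemma layer_iter_le (n : ℕ) (j : V) : T.layer (T.parent^[n] j) ≤ T.layer j := by
  induction n with
  | zero => simp
  | succ n ih =>
    rw [Function.iterate_succ_apply']
    by_cases h : T.parent^[n] j = T.root
    · rw [h, T.parent_root]; simpa [h] using ih
    · exact le_trans (le_of_lt (T.layer_parent_lt h)) ih

lemma pathSet_root : T.pathSet T.root = ∅ := by
  ext k
  simp only [pathSet, Finset.mem_filter, Finset.mem_univ, true_and, Finset.notMem_empty,
    iff_false, not_and]
  rintro hk ⟨n, hn⟩
  have h0 : ∀ m, T.parent^[m] T.root = T.root := by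
    intro m
    induction m with
    | zero => rfl
    | succ m ih => rw [Function.iterate_succ_apply', ih, T.parent_root]
  exact hk ((h0 n) ▸ hn).symm

lemma mem_pathSet_self {i : V} (hi : i ≠ T.root) : i ∈ T.pathSet i := by
  simp only [pathSet, Finset.mem_filter, Finset.mem_univ, true_and]
  exact ⟨hi, 0, rfl⟩

lemma not_mem_pathSet_parent {i : V} (hi : i ≠ T.root) : i ∉ T.pathSet (T.parent i) := by
  simp only [pathSet, Finset.mem_filter, Finset.mem_univ, true_and, not_and]
  rintro - ⟨n, hn⟩
  have h1 := T.layer_iter_le n (T.parent i)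
  rw [hn] at h1
  exact absurd h1 (not_le.mpr (T.layer_parent_lt hi))

lemma pathSet_succ {i : V} (hi : i ≠ T.root) :
    T.pathSet i = insert i (T.pathSet (T.parent i)) := by
  ext k
  simp only [pathSet, Finset.mem_filter, Finset.mem_univ, true_and, Finset.mem_insert]
  constructor
  · rintro ⟨hk, n, hn⟩
    match n, hn with
    | 0, hn => exact Or.inl hn.symm
    | (m+1), hn => exact Or.inr ⟨hk, m, by rwa [Function.iterate_succ_apply] at hn⟩
  · rintro (rfl | ⟨hk, m, hm⟩)
    · exact ⟨hi, 0, rfl⟩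
    · exact ⟨hk, m + 1, by rwa [Function.iterate_succ_apply]⟩

lemma mem_pathSet_ne_root {k i : V} (hk : k ∈ T.pathSet i) : k ≠ T.root := by
  simp only [pathSet, Finset.mem_filter] at hk; exact hk.2.1

lemma mu_pos (k : V) : 0 < T.mu k := by
  refine Finset.prod_pos fun j hj => ?_
  have hj' := T.mem_pathSet_ne_root hj
  exact div_pos (T.q_pos_down j hj') (T.q_pos_up j hj')

lemma mu_rec {j : V} (hj : j ≠ T.root) :
    T.mu j = T.q (T.parent j) j / T.q j (T.parent j) * T.mu (T.parent j) := by
  rw [mu, T.pathSet_succ hj, Finset.prod_insert (T.not_mem_pathSet_parent hj)]; rfl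

lemma mu_sym {j : V} (hj : j ≠ T.root) :
    T.mu j * T.q j (T.parent j) = T.mu (T.parent j) * T.q (T.parent j) j := by
  rw [T.mu_rec hj]
  have := (T.q_pos_up j hj).ne'
  field_simp

end BDTree
namespace BDTree

variable {V : Type*} [Fintype V] (T : BDTree V)

lemma mem_nonroot {i : V} : i ∈ T.nonroot ↔ i ≠ T.root := by
  simp [nonroot]

lemma pos_of_inc (f : V → ℝ) (hf0 : f T.root = 0)
    (hinc : ∀ i, i ≠ T.root → f (T.parent i) < f i) :
    ∀ i, i ≠ T.root → 0 < f i := by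
  have H : ∀ n i, T.layer i ≤ n → i ≠ T.root → 0 < f i := by
    intro n
    induction n with
    | zero =>
      intro i h hi
      have := T.layer_parent i hi
      omega
    | succ n ih =>
      intro i h hi
      by_cases hp : T.parent i = T.root
      · have := hinc i hi
        rwa [hp, hf0] at this
      · have hl := T.layer_parent i hi
        exact lt_trans (ih (T.parent i) (by omega) hp) (hinc i hi)
  exact fun i hi => H (T.layer i) i le_rfl hi

lemma R_mul (w f : V → ℝ) {i : V} (hi : i ≠ T.root)
    (hpar : (if T.parent i = T.root then (0:ℝ) else (w i)⁻¹) * f i = f (T.parent i))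
    (hsons : ∀ j ∈ T.sons i, f j = w j * f i) :
    T.R w i * f i = - T.Omega f i := by
  rw [R, Omega, add_mul, Finset.sum_mul]
  have h1 : T.q i (T.parent i) * (1 - if T.parent i = T.root then (0:ℝ) else (w i)⁻¹) * f i
      = T.q i (T.parent i) * (f i - f (T.parent i)) := by
    rw [← hpar]; ring
  have h2 : ∑ j ∈ T.sons i, T.q i j * (1 - w j) * f i
      = ∑ j ∈ T.sons i, -(T.q i j * (f j - f i)) := by
    refine Finset.sum_congr rfl fun j hj => ?_
    rw [hsons j hj]; ring
  rw [h1, h2, Finset.sum_neg_distrib]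
  ring

end BDTree
namespace BDTree

variable {V : Type*} [Fintype V] (T : BDTree V)

/-- The function built from a test function `w ∈ W`. -/
noncomputable def fW (w : V → ℝ) (i : V) : ℝ :=
  if i = T.root then 0 else ∏ k ∈ T.pathSet i, (if T.parent k = T.root then 1 else w k)

lemma fW_root (w : V → ℝ) : T.fW w T.root = 0 := if_pos rfl

lemma fW_pos {w : V → ℝ} (hw : T.memW w) : ∀ i, i ≠ T.root → 0 < T.fW w i := by
  intro i hi
  rw [fW, if_neg hi]
  refine Finset.prod_pos fun k hk => ?_
  by_cases hpk : T.parent k = T.root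
  · rw [if_pos hpk]; exact one_pos
  · rw [if_neg hpk]
    exact lt_trans one_pos (hw k (T.mem_pathSet_ne_root hk) hpk)

lemma fW_succ (w : V → ℝ) {j : V} (hj : j ≠ T.root) (hpj : T.parent j ≠ T.root) :
    T.fW w j = w j * T.fW w (T.parent j) := by
  rw [fW, fW, if_neg hj, if_neg hpj, T.pathSet_succ hj,
    Finset.prod_insert (T.not_mem_pathSet_parent hj), if_neg hpj]

lemma fW_rel {w : V → ℝ} (hw : T.memW w) {i : V} (hi : i ≠ T.root) :
    (if T.parent i = T.root then (0:ℝ) else (w i)⁻¹) * T.fW w i = T.fW w (T.parent i) := by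
  by_cases hp : T.parent i = T.root
  · rw [if_pos hp, zero_mul, hp, T.fW_root]
  · rw [if_neg hp, T.fW_succ w hi hp, inv_mul_cancel_left₀ (by linarith [hw i hi hp])]

lemma fW_sons {w : V → ℝ} {i : V} (hi : i ≠ T.root) :
    ∀ j ∈ T.sons i, T.fW w j = w j * T.fW w i := by
  intro j hj
  simp only [sons, Finset.mem_filter, Finset.mem_univ, true_and] at hj
  rw [T.fW_succ w hj.1 (hj.2 ▸ hi), hj.2]

lemma sum_sons (F : V → ℝ) :
    ∑ i ∈ T.nonroot, ∑ j ∈ T.sons i, F j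
      = ∑ j ∈ T.nonroot.filter (fun j => T.parent j ≠ T.root), F j := by
  have h1 : ∀ i, ∑ j ∈ T.sons i, F j
      = ∑ j ∈ Finset.univ, if j ≠ T.root ∧ T.parent j = i then F j else 0 := by
    intro i; rw [sons, Finset.sum_filter]
  simp_rw [h1]
  rw [Finset.sum_comm, nonroot, Finset.filter_filter, Finset.sum_filter]
  refine Finset.sum_congr rfl fun j _ => ?_
  by_cases hj : j ≠ T.root
  · simp only [ne_eq, hj, not_false_eq_true, true_and]
    rw [Finset.sum_ite_eq _ (T.parent j) (fun _ => F j)]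
    by_cases hpj : T.parent j = T.root
    · rw [if_neg (by simp [hpj]), if_neg (by simp [hpj])]
    · rw [if_pos (by simp [hpj]), if_pos (by simp [hpj])]
  · rw [if_neg (fun h => hj h.1)]
    exact Finset.sum_eq_zero fun i _ => if_neg (fun h => hj h.1)

end BDTree
namespace BDTree

variable {V : Type*} [Fintype V] (T : BDTree V)

lemma energy (f h : V → ℝ) (hh0 : h T.root = 0) :
    ∑ i ∈ T.nonroot, T.mu i * (-T.Omega f i) * (h i ^ 2 / f i)
      = ∑ i ∈ T.nonroot, T.mu i * T.q i (T.parent i) * (f i - f (T.parent i)) *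
          (h i ^ 2 / f i - h (T.parent i) ^ 2 / f (T.parent i)) := by
  have expand : ∀ i ∈ T.nonroot, T.mu i * (-T.Omega f i) * (h i ^ 2 / f i)
      = T.mu i * T.q i (T.parent i) * (f i - f (T.parent i)) * (h i ^ 2 / f i)
        - ∑ j ∈ T.sons i, T.mu j * T.q j (T.parent j) * (f j - f (T.parent j)) *
            (h (T.parent j) ^ 2 / f (T.parent j)) := by
    intro i hi
    have hi' : i ≠ T.root := T.mem_nonroot.mp hi
    have hson : ∀ j ∈ T.sons i, T.mu j * T.q j (T.parent j) * (f j - f (T.parent j)) *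
        (h (T.parent j) ^ 2 / f (T.parent j))
        = T.mu i * (T.q i j * (f j - f i)) * (h i ^ 2 / f i) := by
      intro j hj
      simp only [sons, Finset.mem_filter, Finset.mem_univ, true_and] at hj
      rw [T.mu_sym hj.1, hj.2]
      ring
    have hx : ∑ j ∈ T.sons i, T.mu i * (T.q i j * (f j - f i)) * (h i ^ 2 / f i)
        = T.mu i * (∑ j ∈ T.sons i, T.q i j * (f j - f i)) * (h i ^ 2 / f i) := by
      rw [Finset.mul_sum, Finset.sum_mul]
    rw [Finset.sum_congr rfl hson, hx, Omega]
    ring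
  rw [Finset.sum_congr rfl expand, Finset.sum_sub_distrib]
  have hswap : ∑ i ∈ T.nonroot, ∑ j ∈ T.sons i, T.mu j * T.q j (T.parent j) *
      (f j - f (T.parent j)) * (h (T.parent j) ^ 2 / f (T.parent j))
      = ∑ j ∈ T.nonroot, T.mu j * T.q j (T.parent j) * (f j - f (T.parent j)) *
          (h (T.parent j) ^ 2 / f (T.parent j)) := by
    rw [T.sum_sons]
    refine Finset.sum_subset (Finset.filter_subset _ _) fun j hj hj' => ?_
    have : T.parent j = T.root := by
      by_contra hc
      exact hj' (Finset.mem_filter.mpr ⟨hj, hc⟩)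
    rw [this, hh0]
    norm_num
  rw [hswap, ← Finset.sum_sub_distrib]
  refine Finset.sum_congr rfl fun i _ => ?_
  ring

lemma dirichlet (f : V → ℝ) (hf0 : f T.root = 0) (hfpos : ∀ i, i ≠ T.root → 0 < f i)
    (c : ℝ) (hc : ∀ i, i ≠ T.root → c * f i ≤ -T.Omega f i)
    (h : V → ℝ) (hh0 : h T.root = 0) :
    c * T.norm2 h ≤ T.D h := by
  have step1 : ∑ i ∈ T.nonroot, T.mu i * (-T.Omega f i) * (h i ^ 2 / f i) ≤ T.D h := by
    rw [T.energy f h hh0, D]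
    refine Finset.sum_le_sum fun i hi => ?_
    have hi' : i ≠ T.root := T.mem_nonroot.mp hi
    have hfi := hfpos i hi'
    have hai : 0 < T.mu i * T.q i (T.parent i) := mul_pos (T.mu_pos i) (T.q_pos_up i hi')
    by_cases hp : T.parent i = T.root
    · rw [hp, hf0, hh0]
      have key : f i * (h i ^ 2 / f i) = h i ^ 2 := mul_div_cancel₀ _ hfi.ne'
      have h02 : (0:ℝ) ^ 2 / 0 = 0 := by norm_num
      rw [h02, sub_zero, sub_zero, sub_zero, mul_assoc, key]
    · have hfp := hfpos _ hp
      have base : (f i - f (T.parent i)) * (h i ^ 2 / f i - h (T.parent i) ^ 2 / f (T.parent i))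
          ≤ (h i - h (T.parent i)) ^ 2 := by
        rw [div_sub_div _ _ hfi.ne' hfp.ne', ← mul_div_assoc,
          div_le_iff₀ (mul_pos hfi hfp)]
        nlinarith [sq_nonneg (f i * h (T.parent i) - f (T.parent i) * h i)]
      calc T.mu i * T.q i (T.parent i) * (f i - f (T.parent i)) *
            (h i ^ 2 / f i - h (T.parent i) ^ 2 / f (T.parent i))
          = T.mu i * T.q i (T.parent i) * ((f i - f (T.parent i)) *
            (h i ^ 2 / f i - h (T.parent i) ^ 2 / f (T.parent i))) := by ring
        _ ≤ T.mu i * T.q i (T.parent i) * (h i - h (T.parent i)) ^ 2 :=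
            mul_le_mul_of_nonneg_left base hai.le
  have step2 : c * T.norm2 h ≤ ∑ i ∈ T.nonroot, T.mu i * (-T.Omega f i) * (h i ^ 2 / f i) := by
    rw [norm2, Finset.mul_sum]
    refine Finset.sum_le_sum fun i hi => ?_
    have hi' : i ≠ T.root := T.mem_nonroot.mp hi
    have hfi := hfpos i hi'
    have key : h i ^ 2 / f i * f i = h i ^ 2 := div_mul_cancel₀ _ hfi.ne'
    have hdiv : (0:ℝ) ≤ h i ^ 2 / f i := div_nonneg (sq_nonneg _) hfi.le
    calc c * (T.mu i * h i ^ 2) = T.mu i * (c * f i) * (h i ^ 2 / f i) := by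
          field_simp
      _ ≤ T.mu i * (-T.Omega f i) * (h i ^ 2 / f i) := by
          refine mul_le_mul_of_nonneg_right ?_ hdiv
          exact mul_le_mul_of_nonneg_left (hc i hi') (T.mu_pos i).le
  linarith

end BDTree
namespace BDTree

variable {V : Type*} [Fintype V] (T : BDTree V)

lemma eigset_nonempty (hne : T.nonroot.Nonempty) :
    {r | ∃ f : V → ℝ, f T.root = 0 ∧ T.norm2 f = 1 ∧ r = T.D f}.Nonempty := by
  obtain ⟨i0, hi0⟩ := hne
  have hi0' : i0 ≠ T.root := T.mem_nonroot.mp hi0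
  set h0 : V → ℝ := fun j => if j = i0 then (Real.sqrt (T.mu i0))⁻¹ else 0 with hh0def
  have hmu := T.mu_pos i0
  refine ⟨T.D h0, h0, ?_, ?_, rfl⟩
  · simp only [hh0def]
    rw [if_neg (fun hc => hi0' hc.symm)]
  · rw [norm2, Finset.sum_eq_single i0]
    · simp only [hh0def, if_pos rfl]
      rw [← Real.sqrt_inv, Real.sq_sqrt (inv_nonneg.mpr hmu.le), mul_inv_cancel₀ hmu.ne']
    · intro j _ hj
      simp only [hh0def, if_neg hj]
      ring
    · intro hcon
      exact absurd hi0 hcon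
  
lemma lam0_ge (hne : T.nonroot.Nonempty) (f : V → ℝ) (hf0 : f T.root = 0)
    (hfpos : ∀ i, i ≠ T.root → 0 < f i) (c : ℝ)
    (hc : ∀ i, i ≠ T.root → c * f i ≤ -T.Omega f i) : c ≤ T.lam0 := by
  rw [lam0]
  refine le_csInf (T.eigset_nonempty hne) ?_
  rintro r ⟨h, hh0, hn2, rfl⟩
  have := T.dirichlet f hf0 hfpos c hc h hh0
  rwa [hn2, mul_one] at this

lemma inf_le_lam0 (hne : T.nonroot.Nonempty) {w : V → ℝ} (hw : T.memW w) :
    T.nonroot.inf' hne (fun i => T.R w i) ≤ T.lam0 := by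
  set c := T.nonroot.inf' hne (fun i => T.R w i) with hcdef
  refine T.lam0_ge hne (T.fW w) (T.fW_root w) (T.fW_pos hw) c fun i hi => ?_
  have h1 : T.R w i * T.fW w i = -T.Omega (T.fW w) i :=
    T.R_mul w (T.fW w) hi (T.fW_rel hw hi) (T.fW_sons hi)
  rw [← h1]
  exact mul_le_mul_of_nonneg_right (Finset.inf'_le _ (T.mem_nonroot.mpr hi))
    (T.fW_pos hw i hi).le

end BDTree
/-- on a finite tree, with `w_i = g_i/g_{i*}` for the eigenfunction `g`,
`R_i(w) = λ₀` for all `i ≠ 0`; consequently `sup_{w∈W} inf_i R_i(w) = λ₀`. -/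
theorem stmt11 {V : Type*} [Fintype V] (T : BDTree V) (hne : T.nonroot.Nonempty)
    (g : V → ℝ)
    (heig : ∀ i, i ≠ T.root → T.Omega g i = -T.lam0 * g i)
    (hg0 : g T.root = 0)
    (hginc : ∀ i, i ≠ T.root → g (T.parent i) < g i) :
    (∀ i, i ≠ T.root → T.R (fun j => g j / g (T.parent j)) i = T.lam0) ∧
    sSup {x | ∃ w, T.memW w ∧ x = T.nonroot.inf' hne fun i => T.R w i} = T.lam0 := by
  have hgpos := T.pos_of_inc g hg0 hginc
  have part1 : ∀ i, i ≠ T.root → T.R (fun j => g j / g (T.parent j)) i = T.lam0 := by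
    intro i hi
    have hgi := (hgpos i hi).ne'
    have hpar : (if T.parent i = T.root then (0:ℝ)
        else ((fun j => g j / g (T.parent j)) i)⁻¹) * g i = g (T.parent i) := by
      by_cases hp : T.parent i = T.root
      · rw [if_pos hp, zero_mul, hp, hg0]
      · rw [if_neg hp]
        simp only
        rw [inv_div, div_mul_cancel₀ _ hgi]
    have hsons : ∀ j ∈ T.sons i, g j = (fun j => g j / g (T.parent j)) j * g i := by
      intro j hj
      simp only [BDTree.sons, Finset.mem_filter, Finset.mem_univ, true_and] at hj
      simp only
      rw [hj.2, div_mul_cancel₀ _ hgi]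
    have h1 := T.R_mul (fun j => g j / g (T.parent j)) g hi hpar hsons
    rw [heig i hi] at h1
    have h2 : T.R (fun j => g j / g (T.parent j)) i * g i = T.lam0 * g i := by
      rw [h1]; ring
    exact mul_right_cancel₀ hgi h2
  refine ⟨part1, ?_⟩
  have hwmem : T.memW (fun j => g j / g (T.parent j)) := by
    intro i hi hpi
    exact (one_lt_div (hgpos _ hpi)).mpr (hginc i hi)
  have hmem : T.lam0 ∈ {x | ∃ w, T.memW w ∧ x = T.nonroot.inf' hne fun i => T.R w i} := by
    refine ⟨fun j => g j / g (T.parent j), hwmem, ?_⟩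
    have hcg : T.nonroot.inf' hne (fun i => T.R (fun j => g j / g (T.parent j)) i)
        = T.nonroot.inf' hne (fun _ => T.lam0) :=
      Finset.inf'_congr hne rfl (fun i hi => part1 i (T.mem_nonroot.mp hi))
    rw [hcg, Finset.inf'_const]
  have hub : ∀ x ∈ {x | ∃ w, T.memW w ∧ x = T.nonroot.inf' hne fun i => T.R w i},
      x ≤ T.lam0 := by
    rintro x ⟨w, hw, rfl⟩
    exact T.inf_le_lam0 hne hw
  exact le_antisymm (csSup_le ⟨_, hmem⟩ hub) (le_csSup ⟨T.lam0, hub⟩ hmem)
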